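/- Let ρ be a nonempty finite string, z a finite string, and i a natural number. Then lcp(ρ^i ++ z, ρ^∞) = i·|ρ| + lcp(z, ρ^∞), and ρ^i ++ z ≺ ρ^∞ if and only if z ≺ ρ^∞. -/

import Mathlib

/-- The length of the longest common prefix of two lists. -/
def lcp {α : Type*} [DecidableEq α] : List α → List α → ℕ
  | a :: x, b :: y => if a = b then lcp x y + 1 else 0
  | _, _ => 0

/-- The first `m` characters of the infinite periodic sequence `ρ^∞`
    (for nonempty `ρ`). -/
def infTake {α : Type*} (ρ : List α) (m : ℕ) : List α :=
  ((List.replicate m ρ).flatten).take m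

/-- The `i`-fold concatenation `ρ^i`. -/
def lpow {α : Type*} (ρ : List α) (i : ℕ) : List α :=
  (List.replicate i ρ).flatten

lemma lcp_append {α : Type*} [DecidableEq α] (p x y : List α) :
    lcp (p ++ x) (p ++ y) = p.length + lcp x y := by
  induction p with
  | nil => simp
  | cons a p ih => simp [lcp, ih]; omega

lemma lex_append_iff {α : Type*} [LinearOrder α] (p x y : List α) :
    List.Lex (· < ·) (p ++ x) (p ++ y) ↔ List.Lex (· < ·) x y := by
  induction p with
  | nil => simp
  | cons a p ih =>
    simp only [List.cons_append]
    constructor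
    · intro h
      cases h with
      | cons h => exact ih.mp h
      | rel h => exact absurd h (lt_irrefl a)
    · intro h; exact List.Lex.cons (ih.mpr h)

lemma infTake_add {α : Type*} (ρ : List α) (hρ : ρ ≠ []) (m : ℕ) :
    infTake ρ (ρ.length + m) = ρ ++ infTake ρ m := by
  have hl : 1 ≤ ρ.length := List.length_pos_iff.mpr hρ
  unfold infTake
  rw [show ρ.length + m = (ρ.length + m - 1) + 1 by omega,
      List.replicate_succ, List.flatten_cons,
      show (ρ.length + m - 1) + 1 = ρ.length + m by omega,
      List.take_length_add_append]
  congr 1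
  have h1 : ρ.length + m - 1 = m + (ρ.length - 1) := by omega
  rw [h1, List.replicate_add, List.flatten_append,
      List.take_append_of_le_length]
  simp [List.length_flatten]
  calc m ≤ m * ρ.length := Nat.le_mul_of_pos_right m hl
  _ = _ := by simp [List.length_flatten, mul_comm]

/-- For nonempty `ρ`: `lcp(ρ^i ++ z, ρ^∞) = i·|ρ| + lcp(z, ρ^∞)`, and
    `ρ^i ++ z ≺ ρ^∞ ↔ z ≺ ρ^∞`. -/
theorem lcp_pow_append_infTake {α : Type*} [LinearOrder α] (ρ z : List α)
    (hρ : ρ ≠ []) (i : ℕ) :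
    lcp (lpow ρ i ++ z) (infTake ρ (lpow ρ i ++ z).length)
        = i * ρ.length + lcp z (infTake ρ z.length) ∧
    ((List.Lex (· < ·) (lpow ρ i ++ z) (infTake ρ (lpow ρ i ++ z).length) ∨
        lpow ρ i ++ z = infTake ρ (lpow ρ i ++ z).length) ↔
      (List.Lex (· < ·) z (infTake ρ z.length) ∨ z = infTake ρ z.length)) := by
  induction i with
  | zero => simp [lpow]
  | succ i ih =>
    have hpow : lpow ρ (i + 1) = ρ ++ lpow ρ i := by
      simp [lpow, List.replicate_succ]
    rw [hpow, List.append_assoc]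
    set w := lpow ρ i ++ z with hw
    have hlen : (ρ ++ w).length = ρ.length + w.length := by simp
    rw [hlen, infTake_add ρ hρ, lcp_append, lex_append_iff,
        List.append_cancel_left_eq]
    refine ⟨?_, ih.2⟩
    rw [ih.1]; ring
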